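/- arXiv:math/0209178 — 2 statements merged into one kernel-verified Lean document; each statement's English description precedes it below -/
import Mathlib

section
/- Let G = G(Q^n,p) be a random subgraph of the n-cube. Then almost surely λ1(G) ≥ (1+o(1))·max(√Δ(G), n·p); precisely, for every ε > 0, Pr[ λ1(G) ≥ (1−ε)·max(√Δ(G), n·p) ] tends to 1 as n → ∞, provided p(n) ≫ n^{-1}·2^{-n}. -/
open MeasureTheory Filter Asymptotics

noncomputable section

/-- The `n`-dimensional cube graph `Q^n`: vertices are vectors in `{0,1}^n`,
two vertices adjacent iff they differ in exactly one coordinate. -/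
def cubeGraph (n : ℕ) : SimpleGraph (Fin n → Bool) where
  Adj x y := hammingDist x y = 1
  symm := ⟨fun x y h => by show hammingDist y x = 1; rwa [hammingDist_comm]⟩
  loopless := ⟨fun x h => by simp [hammingDist_self] at h⟩

/-- The subgraph of the `n`-cube determined by a configuration `ω` of edge indicators:
an edge of `Q^n` is kept iff its indicator is `true`. -/
def randCube (n : ℕ) (ω : Sym2 (Fin n → Bool) → Bool) : SimpleGraph (Fin n → Bool) where
  Adj x y := (cubeGraph n).Adj x y ∧ ω s(x, y) = true
  symm := ⟨fun x y h => ⟨(cubeGraph n).adj_symm h.1, by rw [Sym2.eq_swap]; exact h.2⟩⟩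
  loopless := ⟨fun x h => (cubeGraph n).irrefl h.1⟩

/-- The product Bernoulli(p) measure on edge-indicator configurations: each potential
edge appears independently with probability `p`. -/
def cubeMeasure (n : ℕ) (p : ℝ) : Measure (Sym2 (Fin n → Bool) → Bool) :=
  Measure.pi fun _ => (PMF.bernoulli (min (Real.toNNReal p) 1) (min_le_right _ _)).toMeasure

/-- Degree of a vertex. -/
def deg {V : Type*} [Fintype V] (G : SimpleGraph V) (v : V) : ℕ := (G.neighborSet v).ncard

/-- Maximum degree. -/
def maxDeg {V : Type*} [Fintype V] (G : SimpleGraph V) : ℕ := ⨆ v, deg G v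

/-- Adjacency matrix over ℝ. -/
def adjMat {V : Type*} [Fintype V] (G : SimpleGraph V) : Matrix V V ℝ :=
  @SimpleGraph.adjMatrix ℝ V G (Classical.decRel _) _ _

theorem adjMat_isHermitian {V : Type*} [Fintype V] (G : SimpleGraph V) :
    (adjMat G).IsHermitian := by
  apply Matrix.ext
  intro i j
  simp only [adjMat, Matrix.conjTranspose_apply, SimpleGraph.adjMatrix_apply, star_trivial]
  by_cases h : G.Adj i j
  · rw [if_pos h, if_pos (G.adj_symm h)]
  · rw [if_neg h, if_neg (fun hji => h (G.adj_symm hji))]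

/-- The largest eigenvalue of the adjacency matrix of `G`. -/
def lambda1 {V : Type*} [Fintype V] [DecidableEq V] (G : SimpleGraph V) : ℝ :=
  ⨆ v, (adjMat_isHermitian G).eigenvalues v

/-- `κ(n) = max { k : 2^n C(n,k) p^k (1-p)^{n-k} ≥ 1 }`. -/
def kappa (n : ℕ) (p : ℝ) : ℕ :=
  sSup {k : ℕ | 1 ≤ (2 : ℝ) ^ n * n.choose k * p ^ k * (1 - p) ^ (n - k)}

open Finset Matrix RealInnerProductSpace

lemma rayleigh_bound {m : Type*} [Fintype m] [DecidableEq m] {A : Matrix m m ℝ}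
    (hA : A.IsHermitian) (x : EuclideanSpace ℝ m) :
    ⟪x, Matrix.toEuclideanLin A x⟫ ≤ (⨆ i, hA.eigenvalues i) * ‖x‖ ^ 2 := by
  classical
  set b := hA.eigenvectorBasis with hb
  have hsymm := (Matrix.isHermitian_iff_isSymmetric).1 hA
  have key : ∀ i, ⟪b i, Matrix.toEuclideanLin A x⟫ = hA.eigenvalues i * ⟪b i, x⟫ := by
    intro i
    rw [← hsymm (b i) x]
    have h1 : Matrix.toEuclideanLin A (b i) = hA.eigenvalues i • b i := by
      rw [Matrix.toEuclideanLin_apply]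
      have h2 := hA.mulVec_eigenvectorBasis i
      exact congrArg (WithLp.equiv 2 (m → ℝ)).symm h2
    rw [h1, inner_smul_left]
    simp
  calc ⟪x, Matrix.toEuclideanLin A x⟫
      = ∑ i, ⟪x, b i⟫ * ⟪b i, Matrix.toEuclideanLin A x⟫ :=
        (b.sum_inner_mul_inner x _).symm
    _ = ∑ i, hA.eigenvalues i * (⟪b i, x⟫ * ⟪b i, x⟫) := by
        refine Finset.sum_congr rfl fun i _ => ?_
        rw [key i, real_inner_comm x (b i)]; ring
    _ ≤ ∑ i, (⨆ j, hA.eigenvalues j) * (⟪b i, x⟫ * ⟪b i, x⟫) := by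
        refine Finset.sum_le_sum fun i _ => ?_
        exact mul_le_mul_of_nonneg_right
          (le_ciSup (Set.Finite.bddAbove (Set.finite_range _)) i) (mul_self_nonneg _)
    _ = (⨆ j, hA.eigenvalues j) * ∑ i, ⟪x, b i⟫ * ⟪b i, x⟫ := by
        rw [Finset.mul_sum]
        refine Finset.sum_congr rfl fun i _ => ?_
        rw [real_inner_comm x (b i)]
    _ = _ := by rw [b.sum_inner_mul_inner x x, real_inner_self_eq_norm_sq]

lemma adjMat_apply {V : Type*} [Fintype V] (G : SimpleGraph V) [DecidableRel G.Adj] (u w : V) :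
    adjMat G u w = if G.Adj u w then (1:ℝ) else 0 := by
  simp only [adjMat, SimpleGraph.adjMatrix_apply]
  split <;> rfl

lemma dot_le_lambda1 {V : Type*} [Fintype V] [DecidableEq V] (G : SimpleGraph V) (x : V → ℝ) :
    x ⬝ᵥ (adjMat G).mulVec x ≤ lambda1 G * ∑ v, x v ^ 2 := by
  have h := rayleigh_bound (adjMat_isHermitian G) ((WithLp.equiv 2 (V → ℝ)).symm x)
  have h1 : ⟪(WithLp.equiv 2 (V → ℝ)).symm x,
      Matrix.toEuclideanLin (adjMat G) ((WithLp.equiv 2 (V → ℝ)).symm x)⟫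
      = x ⬝ᵥ (adjMat G).mulVec x := by
    rw [Matrix.toEuclideanLin_apply]
    simp [PiLp.inner_apply, dotProduct, mul_comm]
  have h2 : ‖(WithLp.equiv 2 (V → ℝ)).symm x‖ ^ 2 = ∑ v, x v ^ 2 := by
    rw [EuclideanSpace.norm_eq, Real.sq_sqrt (by positivity)]
    simp [sq_abs]
  rw [h1, h2] at h
  exact h

lemma deg_eq_degree {V : Type*} [Fintype V] (G : SimpleGraph V) [DecidableRel G.Adj] (v : V) :
    deg G v = G.degree v := by
  rw [deg, Set.ncard_eq_toFinset_card', SimpleGraph.degree, SimpleGraph.neighborFinset_def]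

lemma card_filter_adj {V : Type*} [Fintype V] [DecidableEq V] (G : SimpleGraph V)
    [DecidableRel G.Adj] (v : V) : #(univ.filter (G.Adj v)) = deg G v := by
  rw [deg_eq_degree, SimpleGraph.degree, SimpleGraph.neighborFinset_eq_filter]

lemma maxDeg_exists {V : Type*} [Fintype V] [Nonempty V] (G : SimpleGraph V) :
    ∃ v, deg G v = maxDeg G := by
  obtain ⟨v, hv⟩ := Finite.exists_max (deg G)
  exact ⟨v, le_antisymm (le_ciSup (Set.Finite.bddAbove (Set.finite_range _)) v) (ciSup_le hv)⟩

lemma sqrt_maxDeg_le_lambda1 {V : Type*} [Fintype V] [DecidableEq V] [Nonempty V]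
    (G : SimpleGraph V) (hD : maxDeg G ≠ 0) : Real.sqrt (maxDeg G) ≤ lambda1 G := by
  classical
  obtain ⟨v, hv⟩ := maxDeg_exists G
  set D : ℝ := (maxDeg G : ℝ) with hDdef
  have hD0 : (0:ℝ) < D := by
    rw [hDdef]
    exact_mod_cast Nat.pos_of_ne_zero hD
  set s : ℝ := Real.sqrt D with hsdef
  have hs0 : 0 ≤ s := Real.sqrt_nonneg _
  set x : V → ℝ := fun u => if u = v then s else if G.Adj v u then 1 else 0 with hx
  have hx0 : ∀ u, 0 ≤ x u := by
    intro u; simp only [hx]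
    split
    · exact hs0
    · split <;> norm_num
  have hxv : x v = s := by simp [hx]
  have hrow : ∑ w, (if G.Adj v w then (1:ℝ) else 0) = D := by
    rw [Finset.sum_boole, hDdef, ← hv]
    norm_cast
    exact card_filter_adj G v
  have hAv : ∀ w, adjMat G v w * x w = if G.Adj v w then (1:ℝ) else 0 := by
    intro w
    rw [adjMat_apply]
    by_cases h : G.Adj v w
    · have hw : w ≠ v := fun e => G.irrefl (e ▸ h)
      simp [hx, hw, h]
    · simp [h]
  have hmv : ∀ u, (adjMat G).mulVec x u = ∑ w, adjMat G u w * x w := by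
    intro u; simp [Matrix.mulVec, dotProduct]
  have hmulv : (adjMat G).mulVec x v = D := by
    rw [hmv]; simp_rw [hAv]; exact hrow
  have hAnn : ∀ u w, 0 ≤ adjMat G u w := by
    intro u w; rw [adjMat_apply]; split <;> norm_num
  have herase : ∑ u ∈ univ.erase v, x u * (adjMat G u v * x v) = s * D := by
    have hzero : x v * (adjMat G v v * x v) = 0 := by
      rw [adjMat_apply]; simp [G.irrefl]
    rw [Finset.sum_erase (f := fun u => x u * (adjMat G u v * x v)) univ hzero]
    have : ∀ u, x u * (adjMat G u v * x v) = (if G.Adj v u then (1:ℝ) else 0) * s := by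
      intro u
      rw [adjMat_apply, hxv]
      by_cases h : G.Adj u v
      · have hu : u ≠ v := fun e => G.irrefl (e ▸ h)
        simp [hx, hu, h, G.adj_symm h]
      · have h' : ¬ G.Adj v u := fun e => h (G.adj_symm e)
        simp [h, h']
    simp_rw [this, ← Finset.sum_mul, hrow]
    ring
  have hlower : 2 * D * s ≤ x ⬝ᵥ (adjMat G).mulVec x := by
    have hterm : ∀ u ∈ univ.erase v, x u * (adjMat G u v * x v) ≤ x u * ((adjMat G).mulVec x u) := by
      intro u _
      refine mul_le_mul_of_nonneg_left ?_ (hx0 u)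
      rw [hmv]
      exact Finset.single_le_sum (f := fun w => adjMat G u w * x w)
        (fun w _ => mul_nonneg (hAnn u w) (hx0 w)) (mem_univ v)
    calc 2 * D * s = s * D + s * D := by ring
      _ ≤ x v * ((adjMat G).mulVec x v) + ∑ u ∈ univ.erase v, x u * ((adjMat G).mulVec x u) := by
          have h1 : x v * ((adjMat G).mulVec x v) = s * D := by rw [hxv, hmulv]
          have h2 : s * D ≤ ∑ u ∈ univ.erase v, x u * ((adjMat G).mulVec x u) := by
            rw [← herase]; exact Finset.sum_le_sum hterm
          linarith
      _ = x ⬝ᵥ (adjMat G).mulVec x := by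
          rw [dotProduct]
          exact Finset.add_sum_erase univ (fun u => x u * ((adjMat G).mulVec x u)) (mem_univ v)
  have hnorm : ∑ u, x u ^ 2 = 2 * D := by
    have hsq : ∀ u, x u ^ 2 = (if u = v then D else if G.Adj v u then 1 else 0) := by
      intro u
      simp only [hx]
      split
      · exact Real.sq_sqrt hD0.le
      · split <;> norm_num
    simp_rw [hsq]
    rw [← Finset.add_sum_erase univ _ (mem_univ v), if_pos rfl]
    have : ∑ u ∈ univ.erase v, (if u = v then D else if G.Adj v u then (1:ℝ) else 0)
        = ∑ u ∈ univ.erase v, (if G.Adj v u then (1:ℝ) else 0) := by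
      refine Finset.sum_congr rfl fun u hu => ?_
      rw [if_neg (Finset.mem_erase.1 hu).1]
    rw [this, Finset.sum_erase _ (by simp [G.irrefl]), hrow]
    ring
  have hdot := dot_le_lambda1 G x
  rw [hnorm] at hdot
  have hfin : 2 * D * s ≤ lambda1 G * (2 * D) := le_trans hlower hdot
  nlinarith

lemma cube_degree (n : ℕ) (x : Fin n → Bool) : deg (cubeGraph n) x = n := by
  classical
  set F : Fin n → (Fin n → Bool) := fun i => Function.update x i (!(x i)) with hF
  have hinj : Function.Injective F := by
    intro i j hij
    by_contra hne
    have h1 : F i i = !(x i) := by simp [hF]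
    have h2 : F j i = x i := by
      simp only [hF]
      exact Function.update_of_ne hne _ x
    have h3 : (!(x i)) = x i := by rw [← h1, hij, h2]
    simp at h3
  have hset : univ.filter ((cubeGraph n).Adj x) = univ.image F := by
    ext y
    simp only [Finset.mem_filter, Finset.mem_image, Finset.mem_univ, true_and]
    constructor
    · intro hadj
      have h1 : #({i | x i ≠ y i} : Finset (Fin n)) = 1 := hadj
      obtain ⟨i, hi⟩ := Finset.card_eq_one.1 h1
      refine ⟨i, ?_⟩
      funext j
      by_cases hj : j = i
      · subst hj
        have hmem : j ∈ ({i | x i ≠ y i} : Finset (Fin n)) := by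
          rw [hi]; exact Finset.mem_singleton_self j
        have hne : x j ≠ y j := by simpa using hmem
        have : F j j = !(x j) := by simp [hF]
        rw [this]
        cases hxj : x j <;> cases hyj : y j <;> simp_all
      · have hnm : j ∉ ({i | x i ≠ y i} : Finset (Fin n)) := by
          rw [hi]; simpa using hj
        have heq : x j = y j := by
          by_contra hne
          exact hnm (by simpa using hne)
        have : F i j = x j := by
          simp only [hF]
          exact Function.update_of_ne hj _ x
        rw [this, heq]
    · rintro ⟨i, rfl⟩
      show hammingDist x (F i) = 1
      have : ({j | x j ≠ F i j} : Finset (Fin n)) = {i} := by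
        ext j
        simp only [Finset.mem_singleton]
        constructor
        · intro hmem
          by_contra hj
          have : F i j = x j := by
            simp only [hF]
            exact Function.update_of_ne hj _ x
          simp [this] at hmem
        · rintro rfl
          have : F j j = !(x j) := by simp [hF]
          simp [this]
      show #({j | x j ≠ F i j} : Finset (Fin n)) = 1
      rw [this, Finset.card_singleton]
  rw [← card_filter_adj]
  rw [hset, Finset.card_image_of_injective _ hinj, Finset.card_univ, Fintype.card_fin]

def cubeE (n : ℕ) : Finset (Sym2 (Fin n → Bool)) :=
  @Finset.filter _ (· ∈ (cubeGraph n).edgeSet) (Classical.decPred _) univ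

lemma mem_cubeE {n : ℕ} {e : Sym2 (Fin n → Bool)} : e ∈ cubeE n ↔ e ∈ (cubeGraph n).edgeSet := by
  classical
  simp [cubeE]

def edgeInd : Bool → ℝ := fun b => if b then 1 else 0

def Xe (n : ℕ) (ω : Sym2 (Fin n → Bool) → Bool) : ℝ := ∑ e ∈ cubeE n, edgeInd (ω e)

lemma two_mul_card_cubeE (n : ℕ) : 2 * #(cubeE n) = 2 ^ n * n := by
  classical
  have h1 : cubeE n = (cubeGraph n).edgeFinset := by
    ext e; simp [mem_cubeE, SimpleGraph.mem_edgeFinset]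
  have hdeg : ∀ v, (cubeGraph n).degree v = n := fun v => by
    rw [← deg_eq_degree]; exact cube_degree n v
  rw [h1, ← SimpleGraph.sum_degrees_eq_twice_card_edges]
  simp [hdeg, Finset.card_univ, Fintype.card_fun, mul_comm]

lemma card_edge_randCube (n : ℕ) (ω : Sym2 (Fin n → Bool) → Bool)
    [Fintype (randCube n ω).edgeSet] :
    (#(randCube n ω).edgeFinset : ℝ) = Xe n ω := by
  classical
  have h1 : (randCube n ω).edgeFinset = (cubeE n).filter (fun e => ω e = true) := by
    ext e
    induction e using Sym2.ind with
    | _ x y =>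
      simp only [SimpleGraph.mem_edgeFinset, Finset.mem_filter, SimpleGraph.mem_edgeSet,
        mem_cubeE]
      show (cubeGraph n).Adj x y ∧ ω s(x, y) = true ↔ _
      tauto
  rw [h1, Xe]
  have : ∀ e, edgeInd (ω e) = if ω e = true then (1:ℝ) else 0 := by
    intro e; simp [edgeInd]
  simp_rw [this]
  rw [Finset.sum_boole]

lemma two_Xe_le (n : ℕ) (ω : Sym2 (Fin n → Bool) → Bool) :
    2 * Xe n ω ≤ lambda1 (randCube n ω) * 2 ^ n := by
  classical
  have hdot := dot_le_lambda1 (randCube n ω) (fun _ => 1)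
  have h1 : (fun _ => (1:ℝ)) ⬝ᵥ (adjMat (randCube n ω)).mulVec (fun _ => 1)
      = ∑ u, ∑ w, adjMat (randCube n ω) u w := by
    simp [dotProduct, Matrix.mulVec]
  have h2 : ∀ u, ∑ w, adjMat (randCube n ω) u w = ((randCube n ω).degree u : ℝ) := by
    intro u
    simp_rw [adjMat_apply]
    rw [Finset.sum_boole]
    norm_cast
    rw [card_filter_adj, deg_eq_degree]
  have h3 : ∑ u, ∑ w, adjMat (randCube n ω) u w = 2 * Xe n ω := by
    simp_rw [h2]
    rw [← card_edge_randCube n ω]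
    norm_cast
    exact SimpleGraph.sum_degrees_eq_twice_card_edges _
  have h4 : ∑ v : Fin n → Bool, ((1:ℝ))^2 = 2^n := by
    simp [Finset.card_univ, Fintype.card_fun]
  rw [h1, h3] at hdot
  calc 2 * Xe n ω ≤ lambda1 (randCube n ω) * ∑ v : Fin n → Bool, ((1:ℝ))^2 := hdot
    _ = lambda1 (randCube n ω) * 2^n := by rw [h4]

open ProbabilityTheory in
lemma cheb (n : ℕ) {q : ℝ} (h0 : 0 ≤ q) (h1 : q ≤ 1) {c : ℝ} (hc : 0 < c) :
    cubeMeasure n q {ω | c ≤ |Xe n ω - (#(cubeE n) : ℝ) * q|}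
      ≤ ENNReal.ofReal (((#(cubeE n) : ℝ) * q) / c ^ 2) := by
  classical
  set ν : Measure Bool :=
    (PMF.bernoulli (min (Real.toNNReal q) 1) (min_le_right _ _)).toMeasure with hν
  haveI : IsProbabilityMeasure ν := PMF.toMeasure.isProbabilityMeasure _
  letI : MeasureSpace Bool := ⟨ν⟩
  have hvolB : (volume : Measure Bool) = ν := rfl
  have hvol : (volume : Measure (Sym2 (Fin n → Bool) → Bool)) = cubeMeasure n q := by
    rw [MeasureTheory.volume_pi]; rfl
  haveI hPM : IsProbabilityMeasure (volume : Measure (Sym2 (Fin n → Bool) → Bool)) := by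
    rw [MeasureTheory.volume_pi]
    exact Measure.pi.instIsProbabilityMeasure _
  set N : ℝ := (#(cubeE n) : ℝ) with hN
  have hN0 : 0 ≤ N := by rw [hN]; positivity
  -- single coordinate integrals
  have htrue : (ν {true}).toReal = q := by
    rw [hν, PMF.toMeasure_apply_singleton _ _ (measurableSet_singleton _),
      PMF.bernoulli_apply, min_eq_left (Real.toNNReal_le_one.2 h1)]
    simp [ENNReal.toReal_ofReal h0, h0]
  have hfint : ∫ b, edgeInd b ∂ν = q := by
    rw [integral_fintype Integrable.of_finite]
    simp [edgeInd, Measure.real, htrue]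
  have hone : ∫ x : Bool, (1:ℝ) ∂ν = 1 := by
    rw [integral_const, probReal_univ]
    simp
  -- product formulas
  have hprod1 : ∀ e ∈ cubeE n, ∫ ω : Sym2 (Fin n → Bool) → Bool, edgeInd (ω e) = q := by
    intro e _
    have hfun : (fun ω : Sym2 (Fin n → Bool) → Bool => edgeInd (ω e))
        = fun ω => ∏ i, (fun i => if i = e then edgeInd else fun _ => (1:ℝ)) i (ω i) := by
      funext ω
      have h : ∀ i, (fun i => if i = e then edgeInd else fun _ => (1:ℝ)) i (ω i)
          = if i = e then edgeInd (ω i) else 1 := fun i => by by_cases h : i = e <;> simp [h]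
      simp_rw [h, Finset.prod_ite_eq']
      simp
    rw [hfun, MeasureTheory.volume_pi, MeasureTheory.integral_fintype_prod_eq_prod]
    have h : ∀ i, (∫ x : Bool, (if i = e then edgeInd else fun _ => (1:ℝ)) x)
        = if i = e then q else 1 := by
      intro i; by_cases h : i = e <;> simp [h, hvolB, hfint, hone]
    simp_rw [h, Finset.prod_ite_eq']
    simp
  have hprod2 : ∀ e ∈ cubeE n, ∀ e' ∈ cubeE n, e ≠ e' →
      ∫ ω : Sym2 (Fin n → Bool) → Bool, edgeInd (ω e) * edgeInd (ω e') = q * q := by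
    intro e _ e' _ hne
    set g : Sym2 (Fin n → Bool) → Bool → ℝ :=
      fun i => if i = e then edgeInd else if i = e' then edgeInd else fun _ => (1:ℝ) with hg
    have hfun : (fun ω : Sym2 (Fin n → Bool) → Bool => edgeInd (ω e) * edgeInd (ω e'))
        = fun ω => ∏ i, g i (ω i) := by
      funext ω
      rw [← Finset.mul_prod_erase univ _ (Finset.mem_univ e)]
      rw [← Finset.mul_prod_erase (univ.erase e) _
        (Finset.mem_erase.2 ⟨Ne.symm hne, Finset.mem_univ e'⟩)]
      have h1 : g e (ω e) = edgeInd (ω e) := by simp [hg]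
      have h2 : g e' (ω e') = edgeInd (ω e') := by simp [hg, Ne.symm hne]
      have h3 : ∏ i ∈ (univ.erase e).erase e', g i (ω i) = 1 := by
        refine Finset.prod_eq_one fun i hi => ?_
        obtain ⟨hie', hie⟩ := Finset.mem_erase.1 hi
        have hie2 := (Finset.mem_erase.1 hie).1
        simp [hg, hie2, hie']
      rw [h1, h2, h3]
      ring
    rw [hfun, MeasureTheory.volume_pi, MeasureTheory.integral_fintype_prod_eq_prod]
    have h : ∀ i, (∫ x : Bool, g i x) = if i = e then q else if i = e' then q else 1 := by
      intro i
      by_cases h1 : i = e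
      · simp [hg, h1, hvolB, hfint]
      · by_cases h2 : i = e' <;> simp [hg, h1, h2, hvolB, hfint, hone]
    simp_rw [h]
    rw [← Finset.mul_prod_erase univ _ (Finset.mem_univ e),
      ← Finset.mul_prod_erase (univ.erase e) _
        (Finset.mem_erase.2 ⟨Ne.symm hne, Finset.mem_univ e'⟩)]
    have h3 : ∏ i ∈ (univ.erase e).erase e',
        (if i = e then q else if i = e' then q else 1) = 1 := by
      refine Finset.prod_eq_one fun i hi => ?_
      obtain ⟨hie', hie⟩ := Finset.mem_erase.1 hi
      have hie2 := (Finset.mem_erase.1 hie).1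
      simp [hie2, hie']
    rw [h3]
    simp [Ne.symm hne]
  -- expectation
  have hEX : ∫ ω, Xe n ω = N * q := by
    show (∫ ω : Sym2 (Fin n → Bool) → Bool, ∑ e ∈ cubeE n, edgeInd (ω e)) = N * q
    rw [integral_finset_sum _ (fun e _ => Integrable.of_finite)]
    rw [Finset.sum_congr rfl hprod1, Finset.sum_const, hN]
    simp [mul_comm]
  -- second moment
  have hEX2 : ∫ ω, (Xe n ω) ^ 2 = N * q + (N ^ 2 - N) * (q * q) := by
    have hXsq : ∀ ω : Sym2 (Fin n → Bool) → Bool,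
        (Xe n ω) ^ 2 = ∑ e ∈ cubeE n, ∑ e' ∈ cubeE n, edgeInd (ω e) * edgeInd (ω e') := by
      intro ω; rw [Xe, sq, Finset.sum_mul_sum]
    simp_rw [hXsq]
    rw [integral_finset_sum _ (fun e _ => Integrable.of_finite)]
    have hin : ∀ e ∈ cubeE n,
        (∫ ω : Sym2 (Fin n → Bool) → Bool, ∑ e' ∈ cubeE n, edgeInd (ω e) * edgeInd (ω e'))
          = q + (N - 1) * (q * q) := by
      intro e he
      rw [integral_finset_sum _ (fun e' _ => Integrable.of_finite)]
      rw [← Finset.add_sum_erase _ _ he]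
      have hdiag : (∫ ω : Sym2 (Fin n → Bool) → Bool, edgeInd (ω e) * edgeInd (ω e)) = q := by
        have : ∀ ω : Sym2 (Fin n → Bool) → Bool, edgeInd (ω e) * edgeInd (ω e) = edgeInd (ω e) := by
          intro ω; cases h : ω e <;> simp [edgeInd, h]
        simp_rw [this]
        exact hprod1 e he
      have hoff : ∀ e' ∈ (cubeE n).erase e,
          (∫ ω : Sym2 (Fin n → Bool) → Bool, edgeInd (ω e) * edgeInd (ω e')) = q * q := by
        intro e' he'
        obtain ⟨hne, he'2⟩ := Finset.mem_erase.1 he'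
        exact hprod2 e he e' he'2 (Ne.symm hne)
      rw [hdiag, Finset.sum_congr rfl hoff, Finset.sum_const,
        Finset.card_erase_of_mem he]
      have hcard : ((#(cubeE n) - 1 : ℕ) : ℝ) = N - 1 := by
        have h1 : 1 ≤ #(cubeE n) := Finset.card_pos.2 ⟨e, he⟩
        rw [Nat.cast_sub h1, hN]; simp
      rw [nsmul_eq_mul, hcard]
    rw [Finset.sum_congr rfl hin, Finset.sum_const, nsmul_eq_mul, ← hN]
    ring
  -- Memℒp
  have hmem2 : MemLp (Xe n) 2 (volume : Measure (Sym2 (Fin n → Bool) → Bool)) :=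
    ⟨Measurable.of_discrete.aestronglyMeasurable, eLpNorm_lt_top_of_finite⟩
  have hvar : variance (Xe n) volume ≤ N * q := by
    rw [variance_eq_sub hmem2]
    have h2 : (volume : Measure (Sym2 (Fin n → Bool) → Bool))[(Xe n) ^ 2]
        = N * q + (N ^ 2 - N) * (q * q) := by
      rw [← hEX2]
      congr 1
    have h1 : (volume : Measure (Sym2 (Fin n → Bool) → Bool))[Xe n] = N * q := hEX
    rw [h2, h1]
    nlinarith
  have hcheb := meas_ge_le_variance_div_sq (μ := volume) hmem2 hc
  have hset : {ω | c ≤ |Xe n ω - (volume : Measure (Sym2 (Fin n → Bool) → Bool))[Xe n]|}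
      = {ω | c ≤ |Xe n ω - N * q|} := by rw [hEX]
  rw [hset, hvol] at hcheb
  rw [hvol] at hvar
  refine le_trans hcheb (ENNReal.ofReal_le_ofReal ?_)
  gcongr

def Tset (p : ℕ → ℝ) (ε : ℝ) (n : ℕ) : Set (Sym2 (Fin n → Bool) → Bool) :=
  {ω | (1 - ε) * max (Real.sqrt (maxDeg (randCube n ω))) ((n : ℝ) * p n)
        ≤ lambda1 (randCube n ω)}

/-- if `p ≫ n⁻¹ 2⁻ⁿ` then a.s. `λ1(G) ≥ (1+o(1)) max(√Δ, np)`: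
for every `ε > 0`, `Pr[λ1(G) ≥ (1-ε) max(√Δ, np)] → 1`. -/
theorem lambda1_random_cube_lower (p : ℕ → ℝ) (hp : ∀ n, 0 ≤ p n ∧ p n ≤ 1)
    (hgrow : Tendsto (fun n : ℕ => p n * n * 2 ^ n) atTop atTop)
    (ε : ℝ) (hε : 0 < ε) :
    Tendsto (fun n : ℕ =>
      cubeMeasure n (p n) {ω |
        (1 - ε) * max (Real.sqrt (maxDeg (randCube n ω))) ((n : ℝ) * p n)
          ≤ lambda1 (randCube n ω)})
      atTop (nhds 1) := by
    classical
  show Tendsto (fun n : ℕ => cubeMeasure n (p n) (Tset p ε n)) atTop (nhds 1)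
  set ε' : ℝ := min ε (1/2) with hε'def
  have hε'0 : 0 < ε' := lt_min hε (by norm_num)
  have hε'le : ε' ≤ ε := min_le_left _ _
  have hε'half : ε' ≤ 1/2 := min_le_right _ _
  set a : ℕ → ℝ := fun n => (#(cubeE n) : ℝ) * p n with ha
  have h2N : ∀ n : ℕ, 2 * (#(cubeE n) : ℝ) = 2 ^ n * n := by
    intro n
    exact_mod_cast congrArg (Nat.cast : ℕ → ℝ) (two_mul_card_cubeE n)
  have haT : Tendsto a atTop atTop := by
    have heq : a = fun n => (p n * n * 2 ^ n) / 2 := by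
      funext n
      have h := h2N n
      show (#(cubeE n) : ℝ) * p n = (p n * n * 2 ^ n) / 2
      field_simp
      linear_combination p n * h
    rw [heq]
    exact hgrow.atTop_div_const (by norm_num)
  have hsub : ∀ n ω, ¬(ε' * a n ≤ |Xe n ω - a n|) → ω ∈ Tset p ε n := by
    intro n ω h
    push_neg at h
    have habs := abs_lt.1 h
    have hεa : 0 < ε' * a n := lt_of_le_of_lt (abs_nonneg _) h
    have ha0 : 0 < a n := by
      rcases mul_pos_iff.1 hεa with ⟨_, h2⟩ | ⟨h1, _⟩
      · exact h2
      · exact absurd hε'0 (not_lt.2 h1.le)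
    have hexp : (1 - ε') * a n = a n - ε' * a n := by ring
    have hXlow : (1 - ε') * a n ≤ Xe n ω := by
      rw [hexp]; linarith [habs.1]
    have hnp0 : 0 ≤ (n:ℝ) * p n := mul_nonneg (Nat.cast_nonneg n) (hp n).1
    have hlnp : (1 - ε') * ((n:ℝ) * p n) ≤ lambda1 (randCube n ω) := by
      have h2X := two_Xe_le n ω
      have hpow : (0:ℝ) < 2 ^ n := by positivity
      have h2a : 2 * a n = 2 ^ n * ((n:ℝ) * p n) := by
        calc 2 * a n = (2 * (#(cubeE n) : ℝ)) * p n := by rw [ha]; ring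
          _ = 2 ^ n * ((n:ℝ) * p n) := by rw [h2N n]; ring
      have hkey : ((1 - ε') * ((n:ℝ) * p n)) * 2 ^ n ≤ lambda1 (randCube n ω) * 2 ^ n := by
        calc ((1 - ε') * ((n:ℝ) * p n)) * 2 ^ n = (1 - ε') * (2 ^ n * ((n:ℝ) * p n)) := by ring
          _ = (1 - ε') * (2 * a n) := by rw [h2a]
          _ = 2 * ((1 - ε') * a n) := by ring
          _ ≤ 2 * Xe n ω := by linarith [hXlow]
          _ ≤ lambda1 (randCube n ω) * 2 ^ n := h2X
      exact le_of_mul_le_mul_right hkey hpow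
    have hl0 : 0 ≤ lambda1 (randCube n ω) :=
      le_trans (mul_nonneg (by linarith) hnp0) hlnp
    have hlsq : (1 - ε') * Real.sqrt (maxDeg (randCube n ω)) ≤ lambda1 (randCube n ω) := by
      by_cases hD : maxDeg (randCube n ω) = 0
      · rw [hD]; simpa using hl0
      · have hs := sqrt_maxDeg_le_lambda1 (randCube n ω) hD
        have h1 : (1 - ε') * Real.sqrt (maxDeg (randCube n ω))
            ≤ Real.sqrt (maxDeg (randCube n ω)) :=
          mul_le_of_le_one_left (Real.sqrt_nonneg _) (by linarith)
        linarith
    show (1 - ε) * max (Real.sqrt (maxDeg (randCube n ω))) ((n : ℝ) * p n)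
          ≤ lambda1 (randCube n ω)
    have hmax0 : 0 ≤ max (Real.sqrt ((maxDeg (randCube n ω) : ℕ) : ℝ)) ((n:ℝ) * p n) :=
      le_max_of_le_right hnp0
    have hmono : (1 - ε) * max (Real.sqrt (maxDeg (randCube n ω))) ((n : ℝ) * p n)
        ≤ (1 - ε') * max (Real.sqrt (maxDeg (randCube n ω))) ((n : ℝ) * p n) :=
      mul_le_mul_of_nonneg_right (by linarith) hmax0
    refine le_trans hmono ?_
    rw [mul_max_of_nonneg _ _ (by linarith : (0:ℝ) ≤ 1 - ε')]
    exact max_le hlsq hlnp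
  have hμbound : ∀ n, 0 < a n →
      cubeMeasure n (p n) (Tset p ε n)ᶜ ≤ ENNReal.ofReal (a n / (ε' * a n) ^ 2) := by
    intro n han
    have hc : 0 < ε' * a n := by positivity
    have hsubset : (Tset p ε n)ᶜ ⊆ {ω | ε' * a n ≤ |Xe n ω - a n|} := by
      intro ω hω
      by_contra hcon
      exact hω (hsub n ω hcon)
    calc cubeMeasure n (p n) (Tset p ε n)ᶜ
        ≤ cubeMeasure n (p n) {ω | ε' * a n ≤ |Xe n ω - a n|} := measure_mono hsubset
      _ ≤ ENNReal.ofReal (a n / (ε' * a n) ^ 2) := cheb n (hp n).1 (hp n).2 hc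
  have hb0 : Tendsto (fun n => ENNReal.ofReal (a n / (ε' * a n) ^ 2)) atTop (nhds 0) := by
    have h1 : Tendsto (fun n => a n / (ε' * a n) ^ 2) atTop (nhds 0) := by
      have heq : ∀ᶠ n in atTop, a n / (ε' * a n) ^ 2 = (ε' ^ 2 * a n)⁻¹ := by
        filter_upwards [haT.eventually_gt_atTop 0] with n hn
        field_simp
      rw [tendsto_congr' heq]
      have h2 : Tendsto (fun n => ε' ^ 2 * a n) atTop atTop :=
        haT.const_mul_atTop (by positivity)
      exact h2.inv_tendsto_atTop
    simpa using ENNReal.tendsto_ofReal h1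
  have hTc : Tendsto (fun n => cubeMeasure n (p n) (Tset p ε n)ᶜ) atTop (nhds 0) := by
    refine tendsto_of_tendsto_of_tendsto_of_le_of_le' tendsto_const_nhds hb0
      (Eventually.of_forall fun n => zero_le) ?_
    filter_upwards [haT.eventually_gt_atTop 0] with n hn
    exact hμbound n hn
  haveI hprob : ∀ n, IsProbabilityMeasure (cubeMeasure n (p n)) := fun n =>
    Measure.pi.instIsProbabilityMeasure _
  have hT1 : ∀ n, cubeMeasure n (p n) (Tset p ε n) = 1 - cubeMeasure n (p n) (Tset p ε n)ᶜ := by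
    intro n
    have := prob_compl_eq_one_sub (μ := cubeMeasure n (p n)) (s := (Tset p ε n)ᶜ)
      MeasurableSet.of_discrete
    rwa [compl_compl] at this
  simp_rw [hT1]
  have hfin := ENNReal.Tendsto.sub (tendsto_const_nhds (x := (1:ENNReal))) hTc
    (Or.inl ENNReal.one_ne_top)
  simpa using hfin
end
end

section
/- Let G be a finite graph and for every vertex v let W_2(G, v) denote the number of walks of length two in G starting at v (equivalently, W_2(G, v) = Σ_{u ~ v} d_G(u)). Then the largest eigenvalue of the adjacency matrix of G satisfies λ1(G) ≤ √(max_v W_2(G, v)). -/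
open MeasureTheory Filter Asymptotics

noncomputable section

open Classical in
/-- The number of walks of length two starting at `v`: `W₂(G,v) = Σ_{u ~ v} d(u)`. -/
def walk2 {V : Type*} [Fintype V] (G : SimpleGraph V) (v : V) : ℕ :=
  ∑ u ∈ Finset.univ.filter (fun u => G.Adj v u), deg G u

open Matrix

lemma adjMat_nonneg {V : Type*} [Fintype V] (G : SimpleGraph V) (a b : V) :
    0 ≤ adjMat G a b := by
  unfold adjMat; rw [SimpleGraph.adjMatrix_apply]; split <;> norm_num

lemma adjMat_row_sum {V : Type*} [Fintype V] (G : SimpleGraph V) (u : V) :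
    ∑ w, adjMat G u w = (deg G u : ℝ) := by
  classical
  simp only [adjMat, SimpleGraph.adjMatrix_apply, Finset.sum_boole]
  norm_cast
  simp [deg, Set.ncard_eq_toFinset_card', SimpleGraph.neighborSet, Set.toFinset_setOf]

lemma adjMat_walk2 {V : Type*} [Fintype V] (G : SimpleGraph V) (v : V) :
    ∑ u, adjMat G v u * (deg G u : ℝ) = (walk2 G v : ℝ) := by
  classical
  rw [walk2]
  push_cast
  rw [Finset.sum_filter]
  refine Finset.sum_congr rfl fun u _ => ?_
  unfold adjMat; rw [SimpleGraph.adjMatrix_apply]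
  split <;> simp_all

lemma abs_mulVec_le {V : Type*} [Fintype V] (G : SimpleGraph V) (y : V → ℝ) (v : V) :
    |(adjMat G *ᵥ y) v| ≤ ∑ u, adjMat G v u * |y u| := by
  rw [Matrix.mulVec, dotProduct]
  refine (Finset.abs_sum_le_sum_abs _ _).trans (le_of_eq ?_)
  refine Finset.sum_congr rfl fun u _ => ?_
  rw [abs_mul, abs_of_nonneg (adjMat_nonneg G v u)]


/-- `λ1(G) ≤ √(max_v W₂(G,v))`. -/
theorem lambda1_le_sqrt_max_walk2 {V : Type*} [Fintype V] [DecidableEq V]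
    (G : SimpleGraph V) :
    lambda1 G ≤ Real.sqrt ((⨆ v, walk2 G v : ℕ) : ℝ) := by
  classical
  cases isEmpty_or_nonempty V with
  | inl h =>
    rw [lambda1, Real.iSup_of_isEmpty]
    exact Real.sqrt_nonneg _
  | inr h =>
    set hA := adjMat_isHermitian G with hAdef
    refine ciSup_le fun j => ?_
    set μ := hA.eigenvalues j with hμdef
    rcases le_or_gt μ 0 with hμ | hμ
    · exact hμ.trans (Real.sqrt_nonneg _)
    rw [Real.le_sqrt' hμ]
    set x : V → ℝ := ⇑(hA.eigenvectorBasis j) with hxdef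
    have hAx : adjMat G *ᵥ x = μ • x := hA.mulVec_eigenvectorBasis j
    obtain ⟨v, hv⟩ := Finite.exists_max (fun v => |x v|)
    have hvpos : 0 < |x v| := by
      by_contra hc
      push_neg at hc
      have hx0 : hA.eigenvectorBasis j = 0 := by
        ext w
        have : |x w| ≤ 0 := (hv w).trans hc
        simpa [abs_nonpos_iff] using this
      exact hA.eigenvectorBasis.orthonormal.ne_zero j hx0
    -- the key inequality
    have h1 : (adjMat G *ᵥ (adjMat G *ᵥ x)) v = μ ^ 2 * x v := by
      rw [hAx, Matrix.mulVec_smul, hAx]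
      simp [smul_smul, sq, mul_assoc]
    have h2 : ∀ u, |(adjMat G *ᵥ x) u| ≤ (deg G u : ℝ) * |x v| := by
      intro u
      refine (abs_mulVec_le G x u).trans ?_
      calc ∑ w, adjMat G u w * |x w| ≤ ∑ w, adjMat G u w * |x v| :=
            Finset.sum_le_sum fun w _ =>
              mul_le_mul_of_nonneg_left (hv w) (adjMat_nonneg G u w)
        _ = (deg G u : ℝ) * |x v| := by rw [← Finset.sum_mul, adjMat_row_sum]
    have key : μ ^ 2 * |x v| ≤ (walk2 G v : ℝ) * |x v| := by
      calc μ ^ 2 * |x v| = |μ ^ 2 * x v| := by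
            rw [abs_mul, abs_of_nonneg (sq_nonneg μ)]
        _ = |(adjMat G *ᵥ (adjMat G *ᵥ x)) v| := by rw [h1]
        _ ≤ ∑ u, adjMat G v u * |(adjMat G *ᵥ x) u| := abs_mulVec_le G _ v
        _ ≤ ∑ u, adjMat G v u * ((deg G u : ℝ) * |x v|) :=
            Finset.sum_le_sum fun u _ =>
              mul_le_mul_of_nonneg_left (h2 u) (adjMat_nonneg G v u)
        _ = (∑ u, adjMat G v u * (deg G u : ℝ)) * |x v| := by
            rw [Finset.sum_mul]; exact Finset.sum_congr rfl fun u _ => by ring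
        _ = (walk2 G v : ℝ) * |x v| := by rw [adjMat_walk2]
    have hle : μ ^ 2 ≤ (walk2 G v : ℝ) := le_of_mul_le_mul_right key hvpos
    refine hle.trans ?_
    have : walk2 G v ≤ ⨆ v, walk2 G v :=
      le_ciSup (Set.Finite.bddAbove (Set.finite_range _)) v
    exact_mod_cast this
end
end
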